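/- Let F be a field, m ≥ 1, and let M be an m×m matrix over F with Mᵀ = −M and all diagonal entries zero, such that M_{i,i+1} ≠ 0 for every 1 ≤ i ≤ m−1 and M_{ij} = 0 whenever j > i + 1. Then the rank of M equals 2⌊m/2⌋. -/

import Mathlib

open Matrix Finset

namespace RankAltTri
variable {F : Type*} [Field F] {m : ℕ} (M : Matrix (Fin m) (Fin m) F)

noncomputable def superd (j : ℕ) : F :=
  if h : j + 1 < m then M ⟨j, by omega⟩ ⟨j + 1, h⟩ else 1

noncomputable def kvec (i : Fin m) : F :=
  if (i : ℕ) % 2 = 1 then 0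
  else ∏ j ∈ Finset.range ((i : ℕ) / 2), superd M (2 * j) / superd M (2 * j + 1)

theorem kvec_even' (k : ℕ) (h : 2 * k < m) :
    kvec M ⟨2 * k, h⟩ = ∏ j ∈ Finset.range k, superd M (2 * j) / superd M (2 * j + 1) := by
  unfold kvec
  rw [if_neg (by simp)]
  have : (↑(⟨2 * k, h⟩ : Fin m) / 2 : ℕ) = k := by simp
  rw [this]

variable (hskew : Mᵀ = -M) (hdiag : ∀ i, M i i = 0)
  (hsuper : ∀ (i : Fin m) (h : (i : ℕ) + 1 < m), M i ⟨(i : ℕ) + 1, h⟩ ≠ 0)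
  (hzero : ∀ i j : Fin m, (i : ℕ) + 1 < (j : ℕ) → M i j = 0)

include hskew hzero hdiag in
theorem zero_off : ∀ i j : Fin m, (j : ℕ) ≠ (i : ℕ) + 1 → (i : ℕ) ≠ (j : ℕ) + 1 → M i j = 0 := by
  intro i j h1 h2
  rcases lt_trichotomy ((i:ℕ)+1) (j:ℕ) with h | h | h
  · exact hzero i j h
  · exact absurd h.symm h1
  · rcases lt_trichotomy ((j:ℕ)+1) (i:ℕ) with h' | h' | h'
    · have hs := congrFun (congrFun hskew j) i
      simp only [Matrix.transpose_apply, Matrix.neg_apply] at hs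
      rw [show M i j = -M j i from hs, hzero j i h', neg_zero]
    · exact absurd h'.symm h2
    · have : i = j := by ext; omega
      rw [this]; exact hdiag j

include hsuper in
theorem superd_ne (j : ℕ) : superd M j ≠ 0 := by
  unfold superd
  split
  · exact hsuper ⟨j, by omega⟩ ‹_›
  · exact one_ne_zero

include hskew in
theorem skew_apply (i j : Fin m) : M j i = -M i j := by
  have hs := congrFun (congrFun hskew i) j
  simpa only [Matrix.transpose_apply, Matrix.neg_apply] using hs

theorem superd_apply {j : ℕ} (h : j + 1 < m) : M ⟨j, by omega⟩ ⟨j + 1, h⟩ = superd M j := by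
  unfold superd; rw [dif_pos h]

include hskew hdiag hzero in
theorem row_two (y : Fin m → F) (k : ℕ) (h : 2 * k + 2 < m) :
    M.mulVec y ⟨2 * k + 1, by omega⟩ =
      -superd M (2 * k) * y ⟨2 * k, by omega⟩
        + superd M (2 * k + 1) * y ⟨2 * k + 2, h⟩ := by
  have hsum : M.mulVec y ⟨2 * k + 1, by omega⟩ = ∑ j, M ⟨2 * k + 1, by omega⟩ j * y j := rfl
  rw [hsum]
  rw [← Finset.sum_subset (Finset.subset_univ {(⟨2*k, by omega⟩ : Fin m), ⟨2*k+2, h⟩})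
      (fun j _ hj => ?_)]
  · rw [Finset.sum_pair (by simp [Fin.ext_iff])]
    have e1 : M ⟨2*k+1, by omega⟩ ⟨2*k, by omega⟩ = -superd M (2*k) := by
      rw [skew_apply M hskew, superd_apply M (by omega : 2*k+1 < m)]
    have e2 : M ⟨2*k+1, by omega⟩ ⟨2*k+2, h⟩ = superd M (2*k+1) := by
      rw [show (⟨2*k+2, h⟩ : Fin m) = ⟨(2*k+1)+1, by omega⟩ from rfl,
        superd_apply M (by omega : (2*k+1)+1 < m)]
    rw [e1, e2]
  · simp only [Finset.mem_insert, Finset.mem_singleton, Fin.ext_iff] at hj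
    push_neg at hj
    rw [zero_off M hskew hdiag hzero _ j (by simpa using hj.2) (by simp; omega), zero_mul]

include hskew hdiag hzero in
theorem row_last (y : Fin m → F) (h2 : 2 ≤ m) :
    M.mulVec y ⟨m - 1, by omega⟩ = M ⟨m - 1, by omega⟩ ⟨m - 2, by omega⟩ * y ⟨m - 2, by omega⟩ := by
  have hsum : M.mulVec y ⟨m - 1, by omega⟩ = ∑ j, M ⟨m - 1, by omega⟩ j * y j := rfl
  rw [hsum]
  refine Finset.sum_eq_single _ (fun j _ hj => ?_) (fun hc => absurd (Finset.mem_univ _) hc)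
  rw [zero_off M hskew hdiag hzero _ j (by have := j.isLt; simp; omega)
    (by simp [Fin.ext_iff] at hj ⊢; omega), zero_mul]

include hskew hdiag hzero hsuper in
theorem oddzero (y : Fin m → F) (hy : M.mulVec y = 0) :
    ∀ k (h : 2 * k + 1 < m), y ⟨2 * k + 1, h⟩ = 0 := by
  intro k
  induction k with
  | zero =>
    intro h
    have hrow := congrFun hy ⟨0, by omega⟩
    have hsum : M.mulVec y ⟨0, by omega⟩ = ∑ j, M ⟨0, by omega⟩ j * y j := rfl
    rw [hsum] at hrow
    rw [Finset.sum_eq_single (⟨1, by omega⟩ : Fin m) (fun j _ hj => ?_)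
      (fun hc => absurd (Finset.mem_univ _) hc)] at hrow
    · have := hsuper ⟨0, by omega⟩ (by simp; omega)
      simp only [Pi.zero_apply] at hrow
      have : y ⟨1, by omega⟩ = 0 := by
        rcases mul_eq_zero.mp hrow with h' | h'
        · exact absurd h' (by simpa using this)
        · exact h'
      simpa using this
    · rw [zero_off M hskew hdiag hzero _ j (by simp [Fin.ext_iff] at hj ⊢; omega) (by simp),
        zero_mul]
  | succ k ih =>
    intro h
    have hrow := congrFun hy ⟨2 * (k + 1), by omega⟩
    have hsum : M.mulVec y ⟨2 * (k + 1), by omega⟩ = ∑ j, M ⟨2 * (k + 1), by omega⟩ j * y j := rfl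
    rw [hsum] at hrow
    rw [Finset.sum_eq_single (⟨2 * (k + 1) + 1, by omega⟩ : Fin m) (fun j _ hj => ?_)
      (fun hc => absurd (Finset.mem_univ _) hc)] at hrow
    · have := hsuper ⟨2 * (k + 1), by omega⟩ (by simpa using h)
      simp only [Pi.zero_apply] at hrow
      rcases mul_eq_zero.mp hrow with h' | h'
      · exact absurd h' (by simpa using this)
      · exact h'
    · rcases eq_or_ne ((j : ℕ) + 1) (2 * (k + 1)) with hj' | hj'
      · have : j = ⟨2 * k + 1, by omega⟩ := by ext; simp only [Fin.val_mk]; omega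
        rw [this, ih (by omega), mul_zero]
      · rw [zero_off M hskew hdiag hzero _ j (by simp [Fin.ext_iff] at hj ⊢; omega)
          (by simpa using hj'.symm), zero_mul]

include hskew hdiag hzero hsuper in
theorem ker_eq_smul (hm : 1 ≤ m) (y : Fin m → F) (hy : M.mulVec y = 0) :
    y = y ⟨0, by omega⟩ • kvec M := by
  have hodd := oddzero M hskew hdiag hsuper hzero y hy
  have heven : ∀ k (h : 2 * k < m),
      y ⟨2 * k, h⟩ = y ⟨0, by omega⟩ *
        ∏ j ∈ Finset.range k, superd M (2 * j) / superd M (2 * j + 1) := by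
    intro k
    induction k with
    | zero => intro h; simp
    | succ k ih =>
      intro h
      have h2 : 2 * k + 2 < m := by omega
      have hr := row_two M hskew hdiag hzero y k h2
      rw [congrFun hy _] at hr
      have hy2 : y ⟨2 * k + 2, h2⟩ = superd M (2 * k) / superd M (2 * k + 1) * y ⟨2*k, by omega⟩ := by
        have hne := superd_ne M hsuper (2 * k + 1)
        field_simp at hr ⊢
        simp only [Pi.zero_apply] at hr
        linear_combination -hr
      have : (⟨2 * (k + 1), h⟩ : Fin m) = ⟨2 * k + 2, h2⟩ := by ext; simp only [Fin.val_mk]; omega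
      rw [this, hy2, ih (by omega), Finset.prod_range_succ]
      ring
  funext i
  simp only [Pi.smul_apply, smul_eq_mul]
  rcases Nat.even_or_odd (i : ℕ) with ⟨k, hk⟩ | ⟨k, hk⟩
  · have hi : i = ⟨2 * k, by omega⟩ := by ext; simp only [Fin.val_mk]; omega
    rw [hi, heven k (by omega), kvec_even' M k (by omega)]
  · have hi : i = ⟨2 * k + 1, by omega⟩ := by ext; simp only [Fin.val_mk]; omega
    rw [hi, hodd k (by omega)]
    unfold kvec
    rw [if_pos (by simp only [Fin.val_mk]; omega)]
    ring

include hskew hdiag hzero hsuper in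
theorem kvec_ker (hmo : m % 2 = 1) : M.mulVec (kvec M) = 0 := by
  have kodd : ∀ j : Fin m, (j : ℕ) % 2 = 1 → kvec M j = 0 := fun j hj => if_pos hj
  funext i
  rcases Nat.even_or_odd (i : ℕ) with ⟨k, hk⟩ | ⟨k, hk⟩
  · -- even row: all terms vanish
    have hsum : M.mulVec (kvec M) i = ∑ j, M i j * kvec M j := rfl
    rw [hsum, Pi.zero_apply]
    refine Finset.sum_eq_zero fun j _ => ?_
    rcases Nat.even_or_odd (j : ℕ) with ⟨l, hl⟩ | ⟨l, hl⟩
    · rw [zero_off M hskew hdiag hzero i j (by omega) (by omega), zero_mul]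
    · rw [kodd j (by omega), mul_zero]
  · -- odd row
    have hi : i = ⟨2 * k + 1, by omega⟩ := by ext; simp only [Fin.val_mk]; omega
    have h2 : 2 * k + 2 < m := by have := i.isLt; omega
    rw [hi, row_two M hskew hdiag hzero _ k h2, Pi.zero_apply]
    have e1 : kvec M ⟨2 * k, by omega⟩ =
        ∏ j ∈ Finset.range k, superd M (2 * j) / superd M (2 * j + 1) :=
      kvec_even' M k (by omega)
    have e2 : kvec M ⟨2 * k + 2, h2⟩ =
        ∏ j ∈ Finset.range (k + 1), superd M (2 * j) / superd M (2 * j + 1) := by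
      rw [show (⟨2 * k + 2, h2⟩ : Fin m) = ⟨2 * (k + 1), by omega⟩ from by ext; simp; omega]
      exact kvec_even' M (k + 1) (by omega)
    rw [e1, e2, Finset.prod_range_succ]
    have hne := superd_ne M hsuper (2 * k + 1)
    rw [mul_comm (superd M (2 * k + 1)), mul_assoc, div_mul_cancel₀ _ hne]
    ring

include hsuper in
theorem kvec_even_ne (k : ℕ) (h : 2 * k < m) : kvec M ⟨2 * k, h⟩ ≠ 0 := by
  rw [kvec_even' M k h]
  refine Finset.prod_ne_zero_iff.mpr fun j _ => ?_
  exact div_ne_zero (superd_ne M hsuper _) (superd_ne M hsuper _)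

end RankAltTri

open RankAltTri

set_option maxHeartbeats 1000000 in
/-- An alternating tridiagonal `m × m` matrix whose superdiagonal entries are all
nonzero has rank `2⌊m/2⌋`. -/
theorem rank_alternating_tridiagonal (F : Type*) [Field F] (m : ℕ) (hm : 1 ≤ m)
    (M : Matrix (Fin m) (Fin m) F)
    (hskew : Mᵀ = -M) (hdiag : ∀ i, M i i = 0)
    (hsuper : ∀ (i : Fin m) (h : (i : ℕ) + 1 < m), M i ⟨(i : ℕ) + 1, h⟩ ≠ 0)
    (hzero : ∀ i j : Fin m, (i : ℕ) + 1 < (j : ℕ) → M i j = 0) :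
    M.rank = 2 * (m / 2) := by
  have hrn := LinearMap.finrank_range_add_finrank_ker M.mulVecLin
  rw [Module.finrank_fin_fun] at hrn
  have hrank : M.rank = Module.finrank F (LinearMap.range M.mulVecLin) := rfl
  rcases Nat.even_or_odd m with ⟨n, hn⟩ | ⟨n, hn⟩
  · -- m even : kernel is trivial
    have hker : LinearMap.ker M.mulVecLin = ⊥ := by
      rw [Submodule.eq_bot_iff]
      intro y hy
      rw [LinearMap.mem_ker, Matrix.mulVecLin_apply] at hy
      have hy' := ker_eq_smul M hskew hdiag hsuper hzero hm y hy
      -- last row forces y (m-2) = 0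
      have hlast := row_last M hskew hdiag hzero y (by omega)
      rw [congrFun hy _, Pi.zero_apply] at hlast
      have hMne : M ⟨m - 1, by omega⟩ ⟨m - 2, by omega⟩ ≠ 0 := by
        rw [skew_apply M hskew]
        rw [show (⟨m-1, by omega⟩ : Fin m) = ⟨(m-2)+1, by omega⟩ from by ext; simp only [Fin.val_mk]; omega]
        exact neg_ne_zero.mpr (hsuper ⟨m - 2, by omega⟩ (by simp; omega))
      have hym2 : y ⟨m - 2, by omega⟩ = 0 := by
        rcases mul_eq_zero.mp hlast.symm with h' | h'
        · exact absurd h' hMne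
        · exact h'
      have hk2 : kvec M ⟨m - 2, by omega⟩ ≠ 0 := by
        rw [show (⟨m-2, by omega⟩ : Fin m) = ⟨2 * (n-1), by omega⟩ from by ext; simp only [Fin.val_mk]; omega]
        exact kvec_even_ne M hsuper (n - 1) (by omega)
      have hy0 : y ⟨0, by omega⟩ = 0 := by
        have := congrFun hy' ⟨m - 2, by omega⟩
        rw [hym2, Pi.smul_apply, smul_eq_mul] at this
        rcases mul_eq_zero.mp this.symm with h' | h'
        · exact h'
        · exact absurd h' hk2
      rw [hy', hy0, zero_smul]
    rw [hker, finrank_bot] at hrn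
    rw [hrank]
    omega
  · -- m odd : kernel is span of kvec
    have hkv : kvec M ≠ 0 := by
      intro hc
      exact kvec_even_ne M hsuper 0 (by omega) (by simpa using congrFun hc ⟨0, by omega⟩)
    have hker : LinearMap.ker M.mulVecLin = Submodule.span F {kvec M} := by
      refine le_antisymm ?_ ?_
      · intro y hy
        rw [LinearMap.mem_ker, Matrix.mulVecLin_apply] at hy
        rw [ker_eq_smul M hskew hdiag hsuper hzero hm y hy]
        exact Submodule.smul_mem _ _ (Submodule.mem_span_singleton_self _)
      · rw [Submodule.span_le, Set.singleton_subset_iff]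
        rw [SetLike.mem_coe, LinearMap.mem_ker, Matrix.mulVecLin_apply]
        exact kvec_ker M hskew hdiag hsuper hzero (by omega)
    rw [hker, finrank_span_singleton hkv] at hrn
    rw [hrank]
    omega
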